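/- Let q = 2^(2k) for a positive integer k, α a primitive element of F_q, and u, v ∈ {0,1,...,(q-4)/3}. Set h₂ = α^(3u) and h₀ = α^(3u) + α^(3(v+1)). Then f(x) = h₂·x^(q-2) + h₀·(x^((2q-5)/3) + x^((q-4)/3)) is an involution on F_{2^(2k)}. -/

import Mathlib

theorem stmt_6 (F : Type*) [Field F] [Fintype F]
    (k : ℕ) (hk : 0 < k) (hcard : Fintype.card F = 2 ^ (2 * k))
    (α : F) (hα : orderOf α = Fintype.card F - 1)
    (u v : ℕ) (hu : u ≤ (Fintype.card F - 4) / 3) (hv : v ≤ (Fintype.card F - 4) / 3)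
    (h₂ h₀ : F)
    (hh₂ : h₂ = α ^ (3 * u))
    (hh₀ : h₀ = α ^ (3 * u) + α ^ (3 * (v + 1)))
    (f : F → F)
    (hf : ∀ x, f x = h₂ * x ^ (Fintype.card F - 2) +
        h₀ * (x ^ ((2 * Fintype.card F - 5) / 3) + x ^ ((Fintype.card F - 4) / 3))) :
    ∀ x : F, f (f x) = x := by
  -- characteristic 2
  have h2F : (2 : F) = 0 := by
    have := FiniteField.cast_card_eq_zero F
    rw [hcard] at this
    push_cast at this
    exact pow_eq_zero_iff (by omega) |>.mp this
  set q := Fintype.card F with hqdef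
  -- basic numerology
  have hq4 : 4 ≤ q := by
    rw [hcard]
    calc 4 = 2 ^ (2*1) := by norm_num
    _ ≤ 2 ^ (2*k) := Nat.pow_le_pow_right (by norm_num) (by omega)
  have hq3 : q % 3 = 1 := by
    rw [hcard, pow_mul, Nat.pow_mod]
    norm_num
  set m := (q - 4) / 3 with hmdef
  have hm : 3 * m + 4 = q := by omega
  have he1 : q - 2 = 3 * m + 2 := by omega
  have he2 : (2 * q - 5) / 3 = 2 * m + 1 := by omega
  have he3 : q - 1 = 3 * (m + 1) := by omega
  -- α is nonzero, α ^ (q-1) = 1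
  have hα1 : α ^ (q - 1) = 1 := by rw [← hα]; exact pow_orderOf_eq_one α
  have hαne : α ≠ 0 := by
    intro h
    rw [h, zero_pow (by omega)] at hα1
    exact zero_ne_one hα1
  -- f in terms of m
  have hf' : ∀ x : F, f x = h₂ * x ^ (3*m+2) + h₀ * (x ^ (2*m+1) + x ^ m) := by
    intro x; rw [hf x, he1, he2]
  -- the two constants are nonzero with c ^ (m+1) = 1
  have hcube : ∀ w : ℕ, (α ^ (3 * w)) ^ (m + 1) = 1 := by
    intro w
    rw [← pow_mul, show 3 * w * (m + 1) = 3 * (m + 1) * w by ring, pow_mul, ← he3, hα1,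
      one_pow]
  have hAne : h₂ ≠ 0 := by rw [hh₂]; exact pow_ne_zero _ hαne
  have hA1 : h₂ ^ (m + 1) = 1 := by rw [hh₂]; exact hcube u
  have hBeq : h₂ + h₀ = α ^ (3 * (v + 1)) := by
    rw [hh₂, hh₀]
    linear_combination α ^ (3 * u) * h2F
  have hBne : h₂ + h₀ ≠ 0 := by rw [hBeq]; exact pow_ne_zero _ hαne
  have hB1 : (h₂ + h₀) ^ (m + 1) = 1 := by rw [hBeq]; exact hcube (v + 1)
  -- cube of x^(m+1) is 1 for nonzero x
  have hcb : ∀ x : F, x ≠ 0 → (x ^ (m + 1)) ^ 3 = 1 := by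
    intro x hx
    rw [← pow_mul]
    have : (m + 1) * 3 = q - 1 := by omega
    rw [this]
    exact FiniteField.pow_card_sub_one_eq_one x hx
  have hexp : ∀ x : F, f x * x = h₂ * (x ^ (m+1))^3 + h₀ * ((x ^ (m+1))^2 + x ^ (m+1)) := by
    intro x
    rw [hf' x]; ring
  have keyA : ∀ x : F, x ≠ 0 → x ^ (m + 1) = 1 → f x * x = h₂ ∧ (f x) ^ (m + 1) = 1 := by
    intro x hx ht
    have e1 : f x * x = h₂ := by
      have := hexp x
      rw [ht] at this
      rw [this]; linear_combination h₀ * h2F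
    refine ⟨e1, ?_⟩
    have hx' : f x = h₂ * x⁻¹ := by field_simp [← e1]; exact e1
    rw [hx', mul_pow, hA1, inv_pow, ht, inv_one, mul_one]
  have keyB : ∀ x : F, x ≠ 0 → x ^ (m + 1) ≠ 1 →
      f x * x = h₂ + h₀ ∧ (f x) ^ (m + 1) ≠ 1 := by
    intro x hx ht
    have ht3 : (x ^ (m+1)) ^ 3 = 1 := hcb x hx
    have htsum : (x ^ (m+1)) ^ 2 + x ^ (m+1) = 1 := by
      have hfac : (x ^ (m+1) + 1) * ((x ^ (m+1)) ^ 2 + x ^ (m+1) + 1) = 0 := by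
        linear_combination ht3 + ((x ^ (m+1))^2 + x ^ (m+1) + 1) * h2F
      have ht1 : x ^ (m+1) + 1 ≠ 0 := by
        intro h
        apply ht
        linear_combination h - h2F
      have := (mul_eq_zero.mp hfac).resolve_left ht1
      linear_combination this - h2F
    have e1 : f x * x = h₂ + h₀ := by
      have := hexp x
      rw [ht3, htsum] at this
      rw [this]; ring
    refine ⟨e1, ?_⟩
    have hx' : f x = (h₂ + h₀) * x⁻¹ := by field_simp [← e1]; exact e1
    have htne : x ^ (m+1) ≠ 0 := pow_ne_zero _ hx
    have hfp : (f x) ^ (m + 1) = (x ^ (m+1)) ^ 2 := by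
      rw [hx', mul_pow, hB1, inv_pow, one_mul]
      field_simp
      linear_combination -ht3
    rw [hfp]
    intro h
    apply ht
    linear_combination x ^ (m+1) * h - ht3 + (x ^ (m+1) - 1) * h2F
  -- main proof
  intro x
  by_cases hx : x = 0
  · subst hx
    have hf0 : f 0 = 0 := by
      rcases Nat.eq_zero_or_pos m with hm0 | hm0
      · -- q = 4, so u = v = 0 and h₀ = 0
        have hu0 : u = 0 := by omega
        have hv0 : v = 0 := by omega
        have hα3 : α ^ 3 = 1 := by
          have h3 : q - 1 = 3 := by omega
          rwa [h3] at hα1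
        have hh0 : h₀ = 0 := by
          rw [hh₀, hu0, hv0]
          norm_num
          rw [hα3]
          linear_combination h2F
        rw [hf' 0, hm0, hh0]
        simp
      · rw [hf' 0]
        rw [zero_pow (by omega), zero_pow (by omega), zero_pow (by omega)]
        ring
    rw [hf0, hf0]
  · by_cases ht : x ^ (m + 1) = 1
    · obtain ⟨e1, e2⟩ := keyA x hx ht
      have hfxne : f x ≠ 0 := by
        intro h; rw [h, zero_mul] at e1; exact hAne e1.symm
      obtain ⟨e1', -⟩ := keyA (f x) hfxne e2
      exact mul_right_cancel₀ hfxne (by linear_combination e1' - e1)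
    · obtain ⟨e1, e2⟩ := keyB x hx ht
      have hfxne : f x ≠ 0 := by
        intro h; rw [h, zero_mul] at e1; exact hBne e1.symm
      obtain ⟨e1', -⟩ := keyB (f x) hfxne e2
      exact mul_right_cancel₀ hfxne (by linear_combination e1' - e1)
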